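/- For every k ∈ {2,4,8}, every integer n ≥ 2, and every real r > 0, (kn−1)²·cosh⁴(r)·(2r(cosh(2r) + 2) − 3·sinh(2r)) > (k−1)²·sinh⁴(r)·(2r(cosh(2r) − 2) − 3·sinh(2r)). -/

import Mathlib

open Real

lemma aux_sinh_lt (x : ℝ) (hx : 0 < x) : Real.sinh x < x * Real.cosh x := by
  have hmono : StrictMonoOn (fun y : ℝ => y * Real.cosh y - Real.sinh y) (Set.Ici 0) := by
    apply strictMonoOn_of_deriv_pos (convex_Ici 0)
    · fun_prop
    · intro y hy
      rw [interior_Ici] at hy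
      have h : HasDerivAt (fun y : ℝ => y * Real.cosh y - Real.sinh y)
          (y * Real.sinh y) y := by
        have := ((hasDerivAt_id y).mul (Real.hasDerivAt_cosh y)).sub (Real.hasDerivAt_sinh y)
        refine this.congr_deriv ?_
        simp only [id_eq, one_mul]
        ring
      rw [h.deriv]
      exact mul_pos hy (Real.sinh_pos_iff.2 hy)
  have := hmono (Set.self_mem_Ici) (Set.mem_Ici.2 hx.le) hx
  simpa using this

lemma aux_A_pos (r : ℝ) (hr : 0 < r) :
    0 < 2 * r * (Real.cosh (2 * r) + 2) - 3 * Real.sinh (2 * r) := by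
  have hmono : StrictMonoOn
      (fun y : ℝ => 2 * y * (Real.cosh (2 * y) + 2) - 3 * Real.sinh (2 * y)) (Set.Ici 0) := by
    apply strictMonoOn_of_deriv_pos (convex_Ici 0)
    · fun_prop
    · intro y hy
      rw [interior_Ici] at hy
      have hc : HasDerivAt (fun y : ℝ => Real.cosh (2 * y)) (Real.sinh (2 * y) * 2) y := by
        simpa using ((hasDerivAt_id y).const_mul 2).cosh
      have hs : HasDerivAt (fun y : ℝ => Real.sinh (2 * y)) (Real.cosh (2 * y) * 2) y := by
        simpa using ((hasDerivAt_id y).const_mul 2).sinh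
      have h : HasDerivAt (fun y : ℝ => 2 * y * (Real.cosh (2 * y) + 2) - 3 * Real.sinh (2 * y))
          (4 * y * Real.sinh (2 * y) - 4 * Real.cosh (2 * y) + 4) y := by
        have := (((hasDerivAt_id y).const_mul 2).mul (hc.add_const 2)).sub (hs.const_mul 3)
        refine this.congr_deriv ?_
        simp only [id_eq]
        ring
      rw [h.deriv]
      have h1 : Real.sinh y < y * Real.cosh y := aux_sinh_lt y hy
      have h2 : 0 < Real.sinh y := Real.sinh_pos_iff.2 hy
      have e1 : Real.sinh (2 * y) = 2 * Real.sinh y * Real.cosh y := by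
        rw [Real.sinh_two_mul]
      have e2 : Real.cosh (2 * y) = 1 + 2 * Real.sinh y ^ 2 := by
        rw [Real.cosh_two_mul, Real.cosh_sq']; ring
      rw [e1, e2]
      nlinarith [mul_pos h2 (sub_pos.2 h1)]
  have := hmono (Set.self_mem_Ici) (Set.mem_Ici.2 hr.le) hr
  simpa using this

/-- For every k ∈ {2,4,8}, every integer n ≥ 2, and every real r > 0,
(kn−1)²·cosh⁴(r)·(2r(cosh(2r) + 2) − 3·sinh(2r)) >
(k−1)²·sinh⁴(r)·(2r(cosh(2r) − 2) − 3·sinh(2r)). -/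
theorem stmt_19 (k n : ℕ) (hk : k = 2 ∨ k = 4 ∨ k = 8) (hn : 2 ≤ n) (r : ℝ) (hr : 0 < r) :
    ((k : ℝ) - 1) ^ 2 * Real.sinh r ^ 4 * (2 * r * (Real.cosh (2 * r) - 2) - 3 * Real.sinh (2 * r))
      < ((k : ℝ) * n - 1) ^ 2 * Real.cosh r ^ 4 *
        (2 * r * (Real.cosh (2 * r) + 2) - 3 * Real.sinh (2 * r)) := by
  have hA : 0 < 2 * r * (Real.cosh (2 * r) + 2) - 3 * Real.sinh (2 * r) := aux_A_pos r hr
  have hBA : 2 * r * (Real.cosh (2 * r) - 2) - 3 * Real.sinh (2 * r)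
      < 2 * r * (Real.cosh (2 * r) + 2) - 3 * Real.sinh (2 * r) := by nlinarith
  have hs : 0 < Real.sinh r := Real.sinh_pos_iff.2 hr
  have hsc : Real.sinh r < Real.cosh r := Real.sinh_lt_cosh r
  have hs4 : Real.sinh r ^ 4 < Real.cosh r ^ 4 := by
    exact pow_lt_pow_left₀ hsc hs.le (by norm_num)
  have hs4' : 0 < Real.sinh r ^ 4 := by positivity
  have hn' : (2 : ℝ) ≤ (n : ℝ) := by exact_mod_cast hn
  have hk' : (2 : ℝ) ≤ (k : ℝ) := by rcases hk with h | h | h <;> simp [h] <;> norm_num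
  have hkkn : (k : ℝ) < (k : ℝ) * n := by nlinarith
  have hkn : ((k : ℝ) - 1) ^ 2 < ((k : ℝ) * n - 1) ^ 2 := by
    exact pow_lt_pow_left₀ (by linarith) (by linarith) (by norm_num)
  have hkn0 : (0 : ℝ) < ((k : ℝ) - 1) ^ 2 := by nlinarith
  rcases le_or_gt (2 * r * (Real.cosh (2 * r) - 2) - 3 * Real.sinh (2 * r)) 0 with hB | hB
  · have : ((k : ℝ) - 1) ^ 2 * Real.sinh r ^ 4 *
        (2 * r * (Real.cosh (2 * r) - 2) - 3 * Real.sinh (2 * r)) ≤ 0 := by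
      apply mul_nonpos_of_nonneg_of_nonpos (by positivity) hB
    have h2 : 0 < ((k : ℝ) * n - 1) ^ 2 * Real.cosh r ^ 4 *
        (2 * r * (Real.cosh (2 * r) + 2) - 3 * Real.sinh (2 * r)) := by
      apply mul_pos (mul_pos (lt_trans hkn0 hkn) (by positivity)) hA
    linarith
  · have h1 : ((k : ℝ) - 1) ^ 2 * Real.sinh r ^ 4 < ((k : ℝ) * n - 1) ^ 2 * Real.cosh r ^ 4 :=
      mul_lt_mul hkn hs4.le hs4' (by positivity)
    exact mul_lt_mul h1 hBA.le hB (by positivity)
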